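/- Let n ≥ 10, let r ≥ 1, μ0 ≥ 2 be such that K := n/(μ0 r) and n/2 are integers, and suppose (1/12) · μ0 r log n / n ≥ 1. Then there exists a finite family L of n/2 symmetric rank-r matrices in R^{n×n}, each satisfying the standard incoherence condition with parameter μ0, with the following property. Let L* be drawn uniformly from L, let S* be a symmetric random matrix where, independently for each pair (i,j) with i ≤ j, S*_{ij} = S*_{ji} equals −1 with probability 1/3 and 0 otherwise if L*_{ij} = 1, and equals +1 with probability 1/3 and 0 otherwise if L*_{ij} = 0, and let A := L* + S*. Then for every (measurable) estimator L̂ of L* based on A, sup_{L* ∈ L} P(L̂(A) ≠ L*) ≥ 1/2, where the probability is over the randomness of S*. -/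

import Mathlib

open MeasureTheory Matrix

noncomputable section

/-- Frobenius norm of a real matrix. -/
def frobNorm {m n : ℕ} (X : Matrix (Fin m) (Fin n) ℝ) : ℝ :=
  Real.sqrt (∑ i, ∑ j, (X i j) ^ 2)

/-- Nuclear norm: sum of singular values (square roots of eigenvalues of XᵀX). -/
def nuclearNorm {m n : ℕ} (X : Matrix (Fin m) (Fin n) ℝ) : ℝ :=
  ∑ i, Real.sqrt ((show (Xᵀ * X).IsHermitian by
    rw [Matrix.IsHermitian, Matrix.conjTranspose_eq_transpose_of_trivial]
    rw [Matrix.transpose_mul, Matrix.transpose_transpose]).eigenvalues i)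

/-- Spectral norm: operator norm of the associated Euclidean linear map. -/
def specNorm {m n : ℕ} (X : Matrix (Fin m) (Fin n) ℝ) : ℝ :=
  ‖(Matrix.toEuclideanLin X).toContinuousLinearMap‖

/-- Entrywise ℓ∞ norm. -/
def linf {m n : ℕ} (X : Matrix (Fin m) (Fin n) ℝ) : ℝ := ⨆ i, ⨆ j, |X i j|

/-- ℓ∞,2 norm: maximum of the largest row and column ℓ₂ norms. -/
def linf2 {n : ℕ} (X : Matrix (Fin n) (Fin n) ℝ) : ℝ :=
  max (⨆ i, Real.sqrt (∑ j, (X i j) ^ 2)) (⨆ j, Real.sqrt (∑ i, (X i j) ^ 2))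

/-- Operator norm (w.r.t. the Frobenius norm) of a map on n×n matrices. -/
def opNormMap {n : ℕ} (A : Matrix (Fin n) (Fin n) ℝ → Matrix (Fin n) (Fin n) ℝ) : ℝ :=
  ⨆ Z : {Z : Matrix (Fin n) (Fin n) ℝ // frobNorm Z ≤ 1}, frobNorm (A Z.1)

/-- P_Ω for a Boolean sample ω. -/
def projB {n : ℕ} (ω : Fin n × Fin n → Bool) (Z : Matrix (Fin n) (Fin n) ℝ) :
    Matrix (Fin n) (Fin n) ℝ := fun i j => if ω (i, j) then Z i j else 0

open Classical in
/-- P_Ω for a set Ω of indices. -/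
def projS {n : ℕ} (Ω : Set (Fin n × Fin n)) (Z : Matrix (Fin n) (Fin n) ℝ) :
    Matrix (Fin n) (Fin n) ℝ := fun i j => if (i, j) ∈ Ω then Z i j else 0

/-- The tangent-space projection P_T determined by U and V. -/
def projT {n r : ℕ} (U V : Matrix (Fin n) (Fin r) ℝ) (Z : Matrix (Fin n) (Fin n) ℝ) :
    Matrix (Fin n) (Fin n) ℝ :=
  U * Uᵀ * Z + Z * V * Vᵀ - U * Uᵀ * Z * V * Vᵀ

/-- Bernoulli(p) measure on Bool. -/
def bern (p : ℝ) : Measure Bool :=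
  ENNReal.ofReal p • Measure.dirac true + ENNReal.ofReal (1 - p) • Measure.dirac false

/-- Product Bernoulli(p) measure on index samples: each (i,j) observed independently
with probability p. -/
def sampleMeasure (n : ℕ) (p : ℝ) : Measure (Fin n × Fin n → Bool) :=
  Measure.pi fun _ => bern p

/-- ℓ₂ norm of the i-th row of U, i.e. ‖Uᵀ e_i‖₂. -/
def rowNorm {n r : ℕ} (U : Matrix (Fin n) (Fin r) ℝ) (i : Fin n) : ℝ :=
  Real.sqrt (∑ k, (U i k) ^ 2)

open Classical in
/-- The sparse noise matrix S*: for each pair (i,j) (symmetric via (min,max)),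
independently with probability 1/3 equal to −1 if L_{ij} = 1 and to +1 if
L_{ij} = 0, and equal to 0 otherwise. -/
def sPrime {n : ℕ} (L : Matrix (Fin n) (Fin n) ℝ) (ω : Fin n × Fin n → Bool) :
    Matrix (Fin n) (Fin n) ℝ := fun i j =>
  if ω (min i j, max i j) then (if L i j = 1 then -1 else 1) else 0

namespace St3


def fblk (M K r x v : ℕ) : Option ℕ :=
  if v = x then some 0
  else if M ≤ v ∧ v < M + K - 1 then some 0
  else if M + K - 1 ≤ v ∧ v < M + r * K - 1 then some ((v - (M - 1)) / K) else none

variable {M K r x : ℕ}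

lemma div_char (hK : 1 ≤ K) {a k : ℕ} : a / K = k ↔ k * K ≤ a ∧ a < (k + 1) * K := by
  constructor
  · rintro rfl
    exact ⟨Nat.div_mul_le_self a K, (Nat.div_lt_iff_lt_mul (by omega)).mp (Nat.lt_succ_self _)⟩
  · rintro ⟨h1, h2⟩
    exact Nat.div_eq_of_lt_le h1 h2

lemma fblk_eq_some_iff (hK : 1 ≤ K) (hM : 1 ≤ M) (hx : x < M) {v k : ℕ} :
    fblk M K r x v = some k ↔
      (k = 0 ∧ (v = x ∨ (M ≤ v ∧ v < M + K - 1))) ∨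
      (1 ≤ k ∧ M - 1 + k * K ≤ v ∧ v < M - 1 + (k + 1) * K ∧ v < M + r * K - 1) := by
  have hkK : ∀ k : ℕ, 1 ≤ k → K ≤ k * K := fun k hk => Nat.le_mul_of_pos_left K (by omega)
  unfold fblk
  by_cases h1 : v = x
  · rw [if_pos h1]
    constructor
    · rintro h; injection h with h
      exact Or.inl ⟨h.symm, Or.inl h1⟩
    · rintro (⟨rfl, _⟩ | ⟨hk, h2, h3, h4⟩)
      · rfl
      · exfalso; have := hkK k hk; omega
  · rw [if_neg h1]
    by_cases h2 : M ≤ v ∧ v < M + K - 1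
    · rw [if_pos h2]
      constructor
      · rintro h; injection h with h
        exact Or.inl ⟨h.symm, Or.inr h2⟩
      · rintro (⟨rfl, h⟩ | ⟨hk, h3, h4, h5⟩)
        · rfl
        · exfalso; have := hkK k hk; omega
    · rw [if_neg h2]
      by_cases h3 : M + K - 1 ≤ v ∧ v < M + r * K - 1
      · rw [if_pos h3]
        constructor
        · rintro h; injection h with h
          have hd := (div_char hK).mp h
          rcases Nat.eq_zero_or_pos k with rfl | hk
          · exfalso; omega
          · right; omega
        · rintro (⟨rfl, h⟩ | ⟨hk, h4, h5, h6⟩)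
          · exfalso; omega
          · congr 1
            rw [div_char hK]; omega
      · rw [if_neg h3]
        simp only [reduceCtorEq, false_iff]
        rintro (⟨rfl, h⟩ | ⟨hk, h4, h5, h6⟩)
        · omega
        · have := hkK k hk; omega

lemma fblk_some_lt (hK : 1 ≤ K) (hM : 1 ≤ M) (hx : x < M) (hr : 1 ≤ r) {v k : ℕ}
    (h : fblk M K r x v = some k) : k < r := by
  rcases (fblk_eq_some_iff hK hM hx).mp h with ⟨rfl, _⟩ | ⟨hk, h1, h2, h3⟩
  · omega
  · by_contra hc
    push_neg at hc
    have h4 : r * K ≤ k * K := Nat.mul_le_mul_right K hc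
    omega

lemma blockFinset (n : ℕ) (hK : 1 ≤ K) (hM : 1 ≤ M) (hx : x < M) (hn : M + r * K - 1 ≤ n)
    {k : ℕ} (hkr : k < r) :
    (Finset.range n).filter (fun v => fblk M K r x v = some k) =
      if k = 0 then insert x (Finset.Ico M (M + K - 1))
      else Finset.Ico (M - 1 + k * K) (M - 1 + (k + 1) * K) := by
  have hrK : K ≤ r * K := Nat.le_mul_of_pos_left K (by omega)
  rcases Nat.eq_zero_or_pos k with rfl | hk
  · rw [if_pos rfl]
    ext v
    simp only [Finset.mem_filter, Finset.mem_range, Finset.mem_insert,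
      Finset.mem_Ico, fblk_eq_some_iff hK hM hx]
    constructor
    · rintro ⟨_, h⟩
      rcases h with ⟨_, h⟩ | ⟨h, _⟩
      · exact h
      · omega
    · rintro (rfl | h)
      · exact ⟨by omega, Or.inl ⟨trivial, Or.inl rfl⟩⟩
      · exact ⟨by omega, Or.inl ⟨trivial, Or.inr h⟩⟩
  · rw [if_neg (by omega)]
    ext v
    simp only [Finset.mem_filter, Finset.mem_range, Finset.mem_Ico,
      fblk_eq_some_iff hK hM hx]
    constructor
    · rintro ⟨_, h⟩
      rcases h with ⟨h, _⟩ | ⟨_, h1, h2, _⟩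
      · omega
      · omega
    · rintro ⟨h1, h2⟩
      have hkk : (k + 1) * K ≤ r * K := Nat.mul_le_mul_right K (by omega)
      exact ⟨by omega, Or.inr ⟨by omega, h1, h2, by omega⟩⟩

lemma blockCard (n : ℕ) (hK : 1 ≤ K) (hM : 1 ≤ M) (hx : x < M) (hn : M + r * K - 1 ≤ n)
    {k : ℕ} (hkr : k < r) :
    ((Finset.range n).filter (fun v => fblk M K r x v = some k)).card = K := by
  rw [blockFinset n hK hM hx hn hkr]
  rcases Nat.eq_zero_or_pos k with rfl | hk
  · rw [if_pos rfl, Finset.card_insert_of_notMem (by simp [Finset.mem_Ico]; omega),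
      Nat.card_Ico]
    omega
  · rw [if_neg (by omega), Nat.card_Ico]
    have : (k+1)*K = k*K + K := by ring
    omega


def Lmat (n M K r x : ℕ) : Matrix (Fin n) (Fin n) ℝ := fun i j =>
  if (fblk M K r x i.val).isSome ∧ fblk M K r x i.val = fblk M K r x j.val then 1 else 0

def Umat (n M K r x : ℕ) : Matrix (Fin n) (Fin r) ℝ := fun i k =>
  if fblk M K r x i.val = some k.val then (Real.sqrt K)⁻¹ else 0

variable {n M K r x : ℕ}

lemma Lmat_symm : (Lmat n M K r x)ᵀ = Lmat n M K r x := by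
  ext i j
  unfold Lmat Matrix.transpose
  simp only [of_apply]
  have : ((fblk M K r x j.val).isSome ∧ fblk M K r x j.val = fblk M K r x i.val) ↔
      ((fblk M K r x i.val).isSome ∧ fblk M K r x i.val = fblk M K r x j.val) := by
    constructor
    · rintro ⟨h1, h2⟩; exact ⟨h2 ▸ h1, h2.symm⟩
    · rintro ⟨h1, h2⟩; exact ⟨h2 ▸ h1, h2.symm⟩
  rw [if_congr this rfl rfl]

lemma Lmat_binary (i j : Fin n) : Lmat n M K r x i j = 0 ∨ Lmat n M K r x i j = 1 := by
  unfold Lmat; split <;> simp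

lemma Lmat_eq_one_iff {i j : Fin n} :
    Lmat n M K r x i j = 1 ↔ ∃ k, fblk M K r x i.val = some k ∧ fblk M K r x j.val = some k := by
  unfold Lmat
  split
  · rename_i h
    constructor
    · intro _
      rcases h with ⟨h1, h2⟩
      rcases Option.isSome_iff_exists.mp h1 with ⟨k, hk⟩
      exact ⟨k, hk, h2 ▸ hk⟩
    · intro _; rfl
  · rename_i h
    constructor
    · intro h0; exact absurd h0 (by norm_num)
    · rintro ⟨k, hk1, hk2⟩
      exact absurd ⟨Option.isSome_iff_exists.mpr ⟨k, hk1⟩, hk1.trans hk2.symm⟩ h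



lemma fblk_self (hx : x < M) : fblk M K r x x = some 0 := by unfold fblk; rw [if_pos rfl]

lemma fblk_lt_none (hK : 1 ≤ K) {v : ℕ} (hvM : v < M) (hvx : v ≠ x) :
    fblk M K r x v = none := by
  unfold fblk
  rw [if_neg hvx, if_neg (by omega), if_neg (by omega)]

lemma UtU (hK : 1 ≤ K) (hM : 1 ≤ M) (hx : x < M) (hr : 1 ≤ r) (hn : M + r * K - 1 ≤ n) :
    (Umat n M K r x)ᵀ * Umat n M K r x = 1 := by
  ext a b
  rw [Matrix.mul_apply]
  by_cases hab : a = b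
  · subst hab
    rw [Matrix.one_apply_eq]
    have h1 : ∀ i : Fin n, (Umat n M K r x)ᵀ a i * Umat n M K r x i a
        = (if fblk M K r x i.val = some a.val then (K:ℝ)⁻¹ else 0) := by
      intro i
      unfold Umat Matrix.transpose
      simp only [of_apply]
      split
      · rw [← Real.sqrt_inv, Real.mul_self_sqrt (by positivity)]
      · ring
    rw [Finset.sum_congr rfl (fun i _ => h1 i),
      Fin.sum_univ_eq_sum_range (fun v => if fblk M K r x v = some a.val then (K:ℝ)⁻¹ else 0) n,
      ← Finset.sum_filter, Finset.sum_const, blockCard n hK hM hx hn a.isLt, nsmul_eq_mul]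
    field_simp
  · rw [Matrix.one_apply_ne hab]
    apply Finset.sum_eq_zero
    intro i _
    unfold Umat Matrix.transpose
    simp only [of_apply]
    by_cases h1 : fblk M K r x i.val = some a.val
    · rw [if_pos h1]
      rw [if_neg (fun h2 => hab (Fin.val_injective (by
        have := h1.symm.trans h2
        injection this)))]
      ring
    · rw [if_neg h1]; ring


lemma L_decomp (hK : 1 ≤ K) (hM : 1 ≤ M) (hx : x < M) (hr : 1 ≤ r) :
    Lmat n M K r x = Umat n M K r x * Matrix.diagonal (fun _ : Fin r => (K:ℝ)) * (Umat n M K r x)ᵀ := by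
  ext i j
  rw [Matrix.mul_apply]
  have hterm : ∀ b : Fin r, (Umat n M K r x * Matrix.diagonal (fun _ : Fin r => (K:ℝ))) i b
      * (Umat n M K r x)ᵀ b j = (Umat n M K r x i b * Umat n M K r x j b) * K := by
    intro b
    have h0 : (Umat n M K r x * Matrix.diagonal (fun _ : Fin r => (K:ℝ))) i b
        = Umat n M K r x i b * K := Matrix.mul_diagonal _ _ _ _
    rw [h0]
    unfold Matrix.transpose
    simp only [of_apply]
    ring
  rw [Finset.sum_congr rfl (fun b _ => hterm b)]
  cases hfi : fblk M K r x i.val with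
  | none =>
      have hL : Lmat n M K r x i j = 0 := by
        unfold Lmat; rw [if_neg]; rintro ⟨h1, _⟩; rw [hfi] at h1; simp at h1
      rw [hL]
      symm
      apply Finset.sum_eq_zero
      intro b _
      have : Umat n M K r x i b = 0 := by
        unfold Umat; rw [if_neg]; rw [hfi]; simp
      rw [this]; ring
  | some k =>
      have hklt : k < r := fblk_some_lt hK hM hx hr hfi
      by_cases hfj : fblk M K r x j.val = some k
      · have hL : Lmat n M K r x i j = 1 := by
          rw [Lmat_eq_one_iff]; exact ⟨k, hfi, hfj⟩
        rw [hL]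
        rw [Finset.sum_eq_single (⟨k, hklt⟩ : Fin r)]
        · unfold Umat
          rw [hfi, hfj, if_pos rfl]
          have hKpos : (0:ℝ) < K := by
            have : 0 < K := by omega
            exact_mod_cast this
          have hs : Real.sqrt K * Real.sqrt K = (K:ℝ) := Real.mul_self_sqrt hKpos.le
          rw [← mul_inv, hs, inv_mul_cancel₀ hKpos.ne']
        · intro b _ hb
          have : Umat n M K r x i b = 0 := by
            unfold Umat
            rw [if_neg]
            rw [hfi]
            intro hcon
            injection hcon with hcon
            exact hb (Fin.val_injective (by simpa using hcon.symm))
          rw [this]; ring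
        · intro h; exact absurd (Finset.mem_univ _) h
      · have hL : Lmat n M K r x i j = 0 := by
          unfold Lmat; rw [if_neg]
          rintro ⟨h1, h2⟩
          rw [hfi] at h2
          exact hfj h2.symm
        rw [hL]
        symm
        apply Finset.sum_eq_zero
        intro b _
        by_cases hib : fblk M K r x i.val = some b.val
        · have hbk : b.val = k := by rw [hfi] at hib; injection hib with h; omega
          have : Umat n M K r x j b = 0 := by
            unfold Umat; rw [if_neg]; rw [hbk]; exact hfj
          rw [this]; ring
        · have : Umat n M K r x i b = 0 := by unfold Umat; rw [if_neg hib]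
          rw [this]; ring

lemma rowNorm_sq (hK : 1 ≤ K) (hM : 1 ≤ M) (hx : x < M) (hr : 1 ≤ r) (i : Fin n) :
    ∑ k : Fin r, (Umat n M K r x i k) ^ 2 ≤ (K:ℝ)⁻¹ := by
  cases hfi : fblk M K r x i.val with
  | none =>
      have : ∀ k : Fin r, (Umat n M K r x i k)^2 = 0 := by
        intro k
        have : Umat n M K r x i k = 0 := by unfold Umat; rw [if_neg]; rw [hfi]; simp
        rw [this]; ring
      rw [Finset.sum_congr rfl (fun k _ => this k), Finset.sum_const, smul_zero]
      positivity
  | some k =>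
      have hklt : k < r := fblk_some_lt hK hM hx hr hfi
      rw [Finset.sum_eq_single (⟨k, hklt⟩ : Fin r)]
      · unfold Umat
        rw [hfi, if_pos rfl, ← Real.sqrt_inv, sq, Real.mul_self_sqrt (by positivity)]
      · intro b _ hb
        have : Umat n M K r x i b = 0 := by
          unfold Umat; rw [if_neg]; rw [hfi]
          intro hcon
          injection hcon with hcon
          exact hb (Fin.val_injective (by simpa using hcon.symm))
        rw [this]; ring
      · intro h; exact absurd (Finset.mem_univ _) h


section prob
open Classical

def wB : Bool → ENNReal := fun b => if b then ENNReal.ofReal (1/3) else ENNReal.ofReal (2/3)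

lemma bern_singleton (b : Bool) : bern (1/3) {b} = wB b := by
  unfold bern wB
  rw [Measure.add_apply, Measure.smul_apply, Measure.smul_apply,
    Measure.dirac_apply, Measure.dirac_apply]
  cases b <;> simp [Set.indicator] <;> norm_num

lemma bern_univ : bern (1/3) Set.univ = 1 := by
  unfold bern
  rw [Measure.add_apply, Measure.smul_apply, Measure.smul_apply,
    measure_univ, measure_univ]
  simp only [smul_eq_mul, mul_one]
  rw [← ENNReal.ofReal_add (by norm_num) (by norm_num)]
  norm_num

instance : IsProbabilityMeasure (bern (1/3)) := ⟨bern_univ⟩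

variable {n : ℕ}

lemma meas_singleton (ω : Fin n × Fin n → Bool) : MeasurableSet {ω} := by
  rw [← Set.univ_pi_singleton ω]
  exact MeasurableSet.univ_pi (fun c => MeasurableSet.singleton (ω c))

lemma meas_all (S : Set (Fin n × Fin n → Bool)) : MeasurableSet S := by
  have h1 : S = ⋃ ω ∈ S, {ω} := by simp
  rw [h1]
  exact MeasurableSet.biUnion (Set.to_countable S) (fun ω _ => meas_singleton ω)

lemma sm_singleton (ω : Fin n × Fin n → Bool) :
    sampleMeasure n (1/3) {ω} = ∏ c, wB (ω c) := by
  unfold sampleMeasure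
  rw [← Set.univ_pi_singleton ω, Measure.pi_pi]
  exact Finset.prod_congr rfl (fun c _ => bern_singleton (ω c))

lemma sm_univ : sampleMeasure n (1/3) Set.univ = 1 := by
  unfold sampleMeasure
  rw [← Set.pi_univ Set.univ, Measure.pi_pi]
  rw [Finset.prod_congr rfl (fun _ _ => bern_univ), Finset.prod_const_one]

lemma meas_sum (S : Set (Fin n × Fin n → Bool)) :
    sampleMeasure n (1/3) S
      = ∑ ω ∈ Finset.univ.filter (· ∈ S), sampleMeasure n (1/3) {ω} := by
  have h1 : S = ⋃ ω ∈ Finset.univ.filter (· ∈ S), ({ω} : Set _) := by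
    ext ψ; simp
  conv_lhs => rw [h1]
  exact measure_biUnion_finset
    (fun a _ b _ hab => by simp [Set.disjoint_singleton, hab])
    (fun ω _ => meas_singleton ω)

lemma sum_prod (F : (Fin n × Fin n) → Bool → ENNReal) :
    ∑ ω : Fin n × Fin n → Bool, ∏ c, F c (ω c) = ∏ c, (F c true + F c false) := by
  have h1 : ∀ c : Fin n × Fin n, F c true + F c false = ∑ b, F c b := by
    intro c; rw [Fintype.sum_bool]
  rw [Finset.prod_congr rfl (fun c _ => h1 c), Finset.prod_univ_sum]
  rw [Fintype.piFinset_univ]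

end prob

section construct
open Classical

variable {n M K r x : ℕ}

lemma card_filter_fin (p : ℕ → Prop) [DecidablePred p] :
    (Finset.univ.filter (fun i : Fin n => p i.val)).card
      = ((Finset.range n).filter p).card := by
  apply Finset.card_bij (fun i _ => i.val)
  · intro a ha
    simp only [Finset.mem_filter, Finset.mem_range, Finset.mem_univ, true_and] at ha ⊢
    exact ⟨a.isLt, ha⟩
  · intro a _ b _ h
    exact Fin.val_injective h
  · intro b hb
    simp only [Finset.mem_filter, Finset.mem_range, Finset.mem_univ, true_and] at hb
    exact ⟨⟨b, hb.1⟩, by simp [hb.2], rfl⟩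

def subN (x v : ℕ) : ℕ := if v = 0 then x else if v = x then 0 else v

lemma subN_invol (x v : ℕ) : subN x (subN x v) = v := by
  unfold subN; split_ifs <;> omega

lemma subN_lt (hx : x < n) {v : ℕ} (hv : v < n) : subN x v < n := by
  unfold subN; split_ifs <;> omega

lemma fblk_sub (hK : 1 ≤ K) (hM : 1 ≤ M) (hx : x < M) (v : ℕ) :
    fblk M K r x v = fblk M K r 0 (subN x v) := by
  unfold subN
  by_cases h0 : v = 0
  · subst h0
    by_cases hx0 : x = 0
    · subst hx0; rw [if_pos rfl]
    · rw [if_pos rfl, fblk_lt_none hK (by omega) (Ne.symm hx0),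
        fblk_lt_none hK hx hx0]
  · rw [if_neg h0]
    by_cases hvx : v = x
    · subst hvx; rw [if_pos rfl, fblk_self hx, fblk_self (by omega)]
    · rw [if_neg hvx]
      by_cases hvM : v < M
      · rw [fblk_lt_none hK hvM hvx, fblk_lt_none hK hvM h0]
      · unfold fblk
        rw [if_neg hvx, if_neg h0]

def subF (n x : ℕ) (hxn : x < n) : Fin n → Fin n :=
  fun i => ⟨subN x i.val, subN_lt hxn i.isLt⟩

lemma subF_invol (hxn : x < n) (i : Fin n) : subF n x hxn (subF n x hxn i) = i :=
  Fin.ext (subN_invol x i.val)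

lemma Lmat_sub (hK : 1 ≤ K) (hM : 1 ≤ M) (hx : x < M) (hxn : x < n) (i j : Fin n) :
    Lmat n M K r x i j = Lmat n M K r 0 (subF n x hxn i) (subF n x hxn j) := by
  unfold Lmat
  rw [fblk_sub hK hM hx i.val, fblk_sub hK hM hx j.val]
  rfl

def G0 (n M K r : ℕ) : Finset (Fin n × Fin n) :=
  Finset.univ.filter (fun c => Lmat n M K r 0 c.1 c.2 = 1 ∧ (c.1.val = 0 ∨ c.2.val = 0))

lemma G0_card (hK : 1 ≤ K) (hM : 1 ≤ M) (hr : 1 ≤ r) (hn : M + r * K - 1 ≤ n)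
    (hn0 : 0 < n) : (G0 n M K r).card ≤ 2 * K := by
  classical
  set z : Fin n := ⟨0, hn0⟩ with hz
  set T : Finset (Fin n) := Finset.univ.filter (fun j : Fin n => fblk M K r 0 j.val = some 0)
    with hT
  have hTcard : T.card = K := by
    rw [hT, card_filter_fin fun v => fblk M K r 0 v = some 0]
    exact blockCard n hK hM hM hn hr
  have hsub : G0 n M K r ⊆ ({z} ×ˢ T) ∪ (T ×ˢ {z}) := by
    intro c hc
    simp only [G0, Finset.mem_filter, Finset.mem_univ, true_and] at hc
    obtain ⟨h1, h2⟩ := hc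
    rcases Lmat_eq_one_iff.mp h1 with ⟨k, hk1, hk2⟩
    rcases h2 with h2 | h2
    · have hc1 : c.1 = z := Fin.ext h2
      have hk0 : k = 0 := by
        rw [hc1] at hk1
        have : fblk M K r 0 z.val = some 0 := fblk_self hM
        rw [this] at hk1
        injection hk1 with h; omega
      subst hk0
      apply Finset.mem_union_left
      rw [Finset.mem_product]
      exact ⟨by simp [hc1], by simp [hT, Finset.mem_filter, hk2]⟩
    · have hc2 : c.2 = z := Fin.ext h2
      have hk0 : k = 0 := by
        rw [hc2] at hk2
        have : fblk M K r 0 z.val = some 0 := fblk_self hM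
        rw [this] at hk2
        injection hk2 with h; omega
      subst hk0
      apply Finset.mem_union_right
      rw [Finset.mem_product]
      exact ⟨by simp [hT, Finset.mem_filter, hk1], by simp [hc2]⟩
  calc (G0 n M K r).card ≤ (({z} ×ˢ T) ∪ (T ×ˢ {z})).card := Finset.card_le_card hsub
    _ ≤ ({z} ×ˢ T).card + (T ×ˢ {z}).card := Finset.card_union_le _ _
    _ = 1 * T.card + T.card * 1 := by rw [Finset.card_product, Finset.card_product,
        Finset.card_singleton]
    _ ≤ 2 * K := by omega

end construct

section flips
open Classical

variable {n M K r x : ℕ}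

lemma Lmat_one_ne_x (hK : 1 ≤ K) (hM : 1 ≤ M) (hx : x < M) (hx0 : x ≠ 0) {i j : Fin n}
    (h : Lmat n M K r 0 i j = 1) : i.val ≠ x ∧ j.val ≠ x := by
  rcases Lmat_eq_one_iff.mp h with ⟨k, hk1, hk2⟩
  constructor
  · intro hc
    rw [hc, fblk_lt_none hK hx hx0] at hk1
    exact nomatch hk1
  · intro hc
    rw [hc, fblk_lt_none hK hx hx0] at hk2
    exact nomatch hk2

lemma subF_fix (hxn : x < n) {v : Fin n} (h0 : v.val ≠ 0) (hxv : v.val ≠ x) :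
    subF n x hxn v = v := by
  apply Fin.ext
  show subN x v.val = v.val
  unfold subN
  rw [if_neg h0, if_neg hxv]

lemma subF_zero (hxn : x < n) {v : Fin n} (h0 : v.val = 0) :
    (subF n x hxn v).val = x := by
  show subN x v.val = x
  unfold subN
  rw [if_pos h0]

lemma subF_val_zero (hx0 : x ≠ 0) (hxn : x < n) {v : Fin n} :
    (subF n x hxn v).val = 0 ↔ v.val = x := by
  show subN x v.val = 0 ↔ v.val = x
  unfold subN
  split_ifs <;> omega

lemma diff_iff (hK : 1 ≤ K) (hM : 1 ≤ M) (hx : x < M) (hx0 : x ≠ 0) (hxn : x < n)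
    (c : Fin n × Fin n) :
    Lmat n M K r x c.1 c.2 ≠ Lmat n M K r 0 c.1 c.2 ↔
      (c ∈ G0 n M K r ∨ (subF n x hxn c.1, subF n x hxn c.2) ∈ G0 n M K r) := by
  have hsub := Lmat_sub (r := r) hK hM hx hxn c.1 c.2
  constructor
  · intro hne
    rcases Lmat_binary (M := M) (K := K) (r := r) (x := 0) c.1 c.2 with h0 | h0
    · -- L0 c = 0, so L_x c = 1, i.e. L0 (σ c) = 1
      have h1 : Lmat n M K r x c.1 c.2 = 1 := by
        rcases Lmat_binary (M := M) (K := K) (r := r) (x := x) c.1 c.2 with h | h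
        · exact absurd (h.trans h0.symm) hne
        · exact h
      have hσ1 : Lmat n M K r 0 (subF n x hxn c.1) (subF n x hxn c.2) = 1 := hsub ▸ h1
      right
      simp only [G0, Finset.mem_filter, Finset.mem_univ, true_and]
      refine ⟨hσ1, ?_⟩
      by_contra hno
      push_neg at hno
      have hnx := Lmat_one_ne_x hK hM hx hx0 hσ1
      have e1 : subF n x hxn (subF n x hxn c.1) = subF n x hxn c.1 :=
        subF_fix hxn hno.1 hnx.1
      have e2 : subF n x hxn (subF n x hxn c.2) = subF n x hxn c.2 :=
        subF_fix hxn hno.2 hnx.2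
      rw [subF_invol hxn c.1] at e1
      rw [subF_invol hxn c.2] at e2
      rw [← e1, ← e2] at hσ1
      exact absurd (h0.symm.trans hσ1) (by norm_num)
    · -- L0 c = 1
      left
      simp only [G0, Finset.mem_filter, Finset.mem_univ, true_and]
      refine ⟨h0, ?_⟩
      by_contra hno
      push_neg at hno
      have hnx := Lmat_one_ne_x hK hM hx hx0 h0
      have e1 : subF n x hxn c.1 = c.1 := subF_fix hxn hno.1 hnx.1
      have e2 : subF n x hxn c.2 = c.2 := subF_fix hxn hno.2 hnx.2
      rw [e1, e2] at hsub
      exact hne hsub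
  · intro h
    rcases h with h | h
    · simp only [G0, Finset.mem_filter, Finset.mem_univ, true_and] at h
      obtain ⟨h1, h2⟩ := h
      rw [h1, hsub]
      intro hc
      have hnx := Lmat_one_ne_x hK hM hx hx0 hc
      rcases h2 with h2 | h2
      · exact hnx.1 (subF_zero hxn h2)
      · exact hnx.2 (subF_zero hxn h2)
    · simp only [G0, Finset.mem_filter, Finset.mem_univ, true_and] at h
      obtain ⟨h1, h2⟩ := h
      rw [hsub, h1]
      intro hc
      have hnx := Lmat_one_ne_x hK hM hx hx0 hc.symm
      rcases h2 with h2 | h2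
      · exact hnx.1 ((subF_val_zero hx0 hxn).mp h2)
      · exact hnx.2 ((subF_val_zero hx0 hxn).mp h2)

lemma G0_disj_sub (hK : 1 ≤ K) (hM : 1 ≤ M) (hx : x < M) (hx0 : x ≠ 0) (hxn : x < n)
    {c : Fin n × Fin n} (hc : c ∈ G0 n M K r) :
    (subF n x hxn c.1, subF n x hxn c.2) ∉ G0 n M K r := by
  simp only [G0, Finset.mem_filter, Finset.mem_univ, true_and] at hc ⊢
  obtain ⟨h1, _⟩ := hc
  have hnx := Lmat_one_ne_x hK hM hx hx0 h1
  rintro ⟨_, h2 | h2⟩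
  · exact hnx.1 ((subF_val_zero hx0 hxn).mp h2)
  · exact hnx.2 ((subF_val_zero hx0 hxn).mp h2)

end flips

section flipmeasure
open Classical

variable {n M K r x : ℕ}

def flipC (n M K r x : ℕ) : (Fin n × Fin n → Bool) → (Fin n × Fin n → Bool) :=
  fun ω c => if Lmat n M K r x c.1 c.2 = Lmat n M K r 0 c.1 c.2 then ω c else !(ω c)

lemma flipC_invol (ω : Fin n × Fin n → Bool) :
    flipC n M K r x (flipC n M K r x ω) = ω := by
  funext c
  unfold flipC
  by_cases h : Lmat n M K r x c.1 c.2 = Lmat n M K r 0 c.1 c.2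
  · rw [if_pos h, if_pos h]
  · rw [if_neg h, if_neg h, Bool.not_not]

lemma entry_eq (a b : ℝ) (ha : a = 0 ∨ a = 1) (hb : b = 0 ∨ b = 1) (t : Bool) :
    a + (if (if a = b then t else !t) = true then (if a = 1 then (-1:ℝ) else 1) else 0)
      = b + (if t = true then (if b = 1 then (-1:ℝ) else 1) else 0) := by
  rcases ha with rfl | rfl <;> rcases hb with rfl | rfl <;> cases t <;> norm_num

lemma Lmat_symm' (y : ℕ) (i j : Fin n) :
    Lmat n M K r y i j = Lmat n M K r y j i := by
  conv_lhs => rw [← Lmat_symm (x := y)]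
  rw [Matrix.transpose_apply]

lemma Lmat_minmax (y : ℕ) (i j : Fin n) :
    Lmat n M K r y (min i j) (max i j) = Lmat n M K r y i j := by
  rcases le_total i j with h | h
  · rw [min_eq_left h, max_eq_right h]
  · rw [min_eq_right h, max_eq_left h, Lmat_symm']

lemma A_flip_eq (ω : Fin n × Fin n → Bool) :
    Lmat n M K r x + sPrime (Lmat n M K r x) (flipC n M K r x ω)
      = Lmat n M K r 0 + sPrime (Lmat n M K r 0) ω := by
  ext i j
  simp only [Matrix.add_apply]
  unfold sPrime flipC
  rw [Lmat_minmax, Lmat_minmax]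
  exact entry_eq _ _ (Lmat_binary i j) (Lmat_binary i j) (ω (min i j, max i j))

lemma wB_pair (b b' : Bool) :
    wB (!b) * wB (!b') ≤ (if b then (4:ENNReal) else 1) * (wB b * wB b') := by
  have h4 : (4:ENNReal) = ENNReal.ofReal 4 := (ENNReal.ofReal_ofNat 4).symm
  cases b <;> cases b' <;>
      simp only [Bool.not_true, Bool.not_false, wB, Bool.false_eq_true, if_false, if_true,
        one_mul, h4]
  · rw [← ENNReal.ofReal_mul (by norm_num), ← ENNReal.ofReal_mul (by norm_num)]
    exact ENNReal.ofReal_le_ofReal (by norm_num)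
  · rw [← ENNReal.ofReal_mul (by norm_num), ← ENNReal.ofReal_mul (by norm_num)]
    exact ENNReal.ofReal_le_ofReal (by norm_num)
  · rw [← ENNReal.ofReal_mul (by norm_num), ← ENNReal.ofReal_mul (by norm_num),
      ← ENNReal.ofReal_mul (by norm_num)]
    exact ENNReal.ofReal_le_ofReal (by norm_num)
  · rw [← ENNReal.ofReal_mul (by norm_num), ← ENNReal.ofReal_mul (by norm_num),
      ← ENNReal.ofReal_mul (by norm_num)]
    exact ENNReal.ofReal_le_ofReal (by norm_num)

lemma prod_flip_le (hK : 1 ≤ K) (hM : 1 ≤ M) (hx : x < M) (hxn : x < n)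
    (ω : Fin n × Fin n → Bool) :
    (∏ c, wB (flipC n M K r x ω c)) ≤
      (∏ c, wB (ω c)) * ∏ c ∈ G0 n M K r, (if ω c then (4:ENNReal) else 1) := by
  by_cases hx0 : x = 0
  · subst hx0
    have hfl : flipC n M K r 0 ω = ω := funext fun c => by unfold flipC; rw [if_pos rfl]
    rw [hfl]
    refine le_mul_of_one_le_right zero_le (Finset.one_le_prod' fun c _ => ?_)
    split
    · norm_num
    · exact le_refl 1
  · set Sg : Fin n × Fin n → Fin n × Fin n :=
      fun c => (subF n x hxn c.1, subF n x hxn c.2) with hSg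
    have hSginv : ∀ c, Sg (Sg c) = c := by
      intro c
      simp only [hSg, subF_invol hxn]
    have hSginj : Function.Injective Sg := by
      intro a b hab
      rw [← hSginv a, hab, hSginv b]
    set P : Fin n × Fin n → Prop :=
      fun c => Lmat n M K r x c.1 c.2 = Lmat n M K r 0 c.1 c.2 with hP
    set D : Finset (Fin n × Fin n) := Finset.univ.filter (fun c => ¬ P c) with hD
    have hsplit : ∀ g : (Fin n × Fin n) → ENNReal,
        ∏ c, g c = (∏ c ∈ Finset.univ.filter P, g c) * ∏ c ∈ D, g c := by
      intro g
      rw [hD, Finset.prod_filter_mul_prod_filter_not]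
    have hflipon : ∀ c ∈ D, wB (flipC n M K r x ω c) = wB (!(ω c)) := by
      intro c hc
      rw [hD, Finset.mem_filter] at hc
      unfold flipC
      rw [if_neg hc.2]
    have hflipoff : ∀ c ∈ Finset.univ.filter P, wB (flipC n M K r x ω c) = wB (ω c) := by
      intro c hc
      rw [Finset.mem_filter] at hc
      unfold flipC
      rw [if_pos hc.2]
    -- decompose D
    have hDeq : D = G0 n M K r ∪ (G0 n M K r).image Sg := by
      ext c
      rw [hD, Finset.mem_filter, Finset.mem_union]
      constructor
      · rintro ⟨-, hc⟩
        rcases (diff_iff hK hM hx hx0 hxn c).mp hc with h | h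
        · exact Or.inl h
        · exact Or.inr (Finset.mem_image.mpr ⟨Sg c, h, hSginv c⟩)
      · intro h
        refine ⟨Finset.mem_univ _, ?_⟩
        rw [show (¬ P c) = (Lmat n M K r x c.1 c.2 ≠ Lmat n M K r 0 c.1 c.2) from rfl,
          diff_iff hK hM hx hx0 hxn c]
        rcases h with h | h
        · exact Or.inl h
        · rcases Finset.mem_image.mp h with ⟨d, hd, hdc⟩
          right
          have hgoal : Sg c ∈ G0 n M K r := by rw [← hdc, hSginv d]; exact hd
          exact hgoal
    have hdisj : Disjoint (G0 n M K r) ((G0 n M K r).image Sg) := by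
      rw [Finset.disjoint_left]
      intro c hc hc2
      rcases Finset.mem_image.mp hc2 with ⟨d, hd, hdc⟩
      have : Sg c ∈ G0 n M K r := by rw [← hdc, hSginv d]; exact hd
      exact G0_disj_sub hK hM hx hx0 hxn hc this
    have hDprod : ∀ g : (Fin n × Fin n) → ENNReal,
        ∏ c ∈ D, g c = ∏ c ∈ G0 n M K r, (g c * g (Sg c)) := by
      intro g
      rw [hDeq, Finset.prod_union hdisj,
        Finset.prod_image (fun a _ b _ h => hSginj h), Finset.prod_mul_distrib]
    rw [hsplit (fun c => wB (flipC n M K r x ω c)), hsplit (fun c => wB (ω c)),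
      Finset.prod_congr rfl hflipoff, Finset.prod_congr rfl hflipon, mul_assoc]
    apply mul_le_mul_right
    rw [hDprod (fun c => wB (!(ω c))), hDprod (fun c => wB (ω c)),
      ← Finset.prod_mul_distrib]
    apply Finset.prod_le_prod'
    intro c _
    calc wB (!ω c) * wB (!ω (Sg c))
        ≤ (if ω c then (4:ENNReal) else 1) * (wB (ω c) * wB (ω (Sg c))) :=
          wB_pair (ω c) (ω (Sg c))
      _ = wB (ω c) * wB (ω (Sg c)) * (if ω c then (4:ENNReal) else 1) := by ring

end flipmeasure

section master
open Classical

variable {n M K r : ℕ}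

lemma total_weight :
    ∑ ω : Fin n × Fin n → Bool,
        (∏ c, wB (ω c)) * (∏ c ∈ G0 n M K r, if ω c then (4:ENNReal) else 1)
      = 2 ^ (G0 n M K r).card := by
  have h1 : ∀ ω : Fin n × Fin n → Bool,
      (∏ c, wB (ω c)) * (∏ c ∈ G0 n M K r, if ω c then (4:ENNReal) else 1)
        = ∏ c, (wB (ω c) * (if c ∈ G0 n M K r then (if ω c then (4:ENNReal) else 1) else 1)) := by
    intro ω
    rw [Finset.prod_mul_distrib]
    congr 1
    rw [Finset.prod_ite_mem Finset.univ (G0 n M K r)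
      (fun c => if ω c then (4:ENNReal) else 1), Finset.univ_inter]
  rw [Finset.sum_congr rfl (fun ω _ => h1 ω),
    sum_prod (fun c b => wB b * (if c ∈ G0 n M K r then (if b then (4:ENNReal) else 1) else 1))]
  have h2 : ∀ c : Fin n × Fin n,
      (wB true * (if c ∈ G0 n M K r then (4:ENNReal) else 1)
        + wB false * (if c ∈ G0 n M K r then (1:ENNReal) else 1))
      = if c ∈ G0 n M K r then 2 else 1 := by
    intro c
    by_cases hc : c ∈ G0 n M K r
    · rw [if_pos hc, if_pos hc, if_pos hc]
      unfold wB
      rw [if_pos rfl, if_neg (by simp), mul_one,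
        show (4:ENNReal) = ENNReal.ofReal 4 from (ENNReal.ofReal_ofNat 4).symm,
        ← ENNReal.ofReal_mul (by norm_num), ← ENNReal.ofReal_add (by norm_num) (by norm_num)]
      norm_num
    · rw [if_neg hc, if_neg hc, if_neg hc, mul_one, mul_one]
      unfold wB
      rw [if_pos rfl, if_neg (by simp),
        ← ENNReal.ofReal_add (by norm_num) (by norm_num)]
      norm_num
  have h3 : ∀ c : Fin n × Fin n,
      (wB true * (if c ∈ G0 n M K r then (if (true:Bool) then (4:ENNReal) else 1) else 1)
        + wB false * (if c ∈ G0 n M K r then (if (false:Bool) then (4:ENNReal) else 1) else 1))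
      = if c ∈ G0 n M K r then 2 else 1 := by
    intro c
    have := h2 c
    simpa using this
  rw [Finset.prod_congr rfl (fun c _ => h3 c)]
  rw [Finset.prod_ite_mem Finset.univ (G0 n M K r) (fun _ => (2:ENNReal)), Finset.univ_inter,
    Finset.prod_const]

lemma Lmat_inj (hK : 1 ≤ K) {x x' : ℕ} (hx : x < M) (hx' : x' < M) (hMn : M ≤ n)
    (hne : x ≠ x') : Lmat n M K r x ≠ Lmat n M K r x' := by
  intro h
  have hxn : x < n := lt_of_lt_of_le hx hMn
  have h1 : Lmat n M K r x ⟨x, hxn⟩ ⟨x, hxn⟩ = 1 :=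
    Lmat_eq_one_iff.mpr ⟨0, fblk_self hx, fblk_self hx⟩
  have h2 : Lmat n M K r x' ⟨x, hxn⟩ ⟨x, hxn⟩ = 0 := by
    unfold Lmat
    rw [if_neg]
    rintro ⟨hs, -⟩
    rw [show ((⟨x, hxn⟩ : Fin n) : ℕ) = x from rfl, fblk_lt_none hK hx hne] at hs
    simp at hs
  rw [h, h2] at h1
  norm_num at h1

lemma succ_sum (hK : 1 ≤ K) (hM : 1 ≤ M) (hr : 1 ≤ r) (hMn : M ≤ n)
    (hn : M + r * K - 1 ≤ n) (hn0 : 0 < n)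
    (Lh : Matrix (Fin n) (Fin n) ℝ → Matrix (Fin n) (Fin n) ℝ) :
    ∑ l : Fin M, sampleMeasure n (1/3)
        {ω | Lh (Lmat n M K r l.val + sPrime (Lmat n M K r l.val) ω) = Lmat n M K r l.val}
      ≤ 2 ^ (2 * K) := by
  set W : (Fin n × Fin n → Bool) → ENNReal :=
    fun ω => ∏ c ∈ G0 n M K r, (if ω c then (4:ENNReal) else 1) with hW
  have step1 : ∀ l : Fin M,
      sampleMeasure n (1/3) {ω | Lh (Lmat n M K r l.val + sPrime (Lmat n M K r l.val) ω) = Lmat n M K r l.val}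
        ≤ ∑ ψ ∈ Finset.univ.filter
            (fun ψ => Lh (Lmat n M K r 0 + sPrime (Lmat n M K r 0) ψ) = Lmat n M K r l.val),
            (∏ c, wB (ψ c)) * W ψ := by
    intro l
    have hx : l.val < M := l.isLt
    have hxn : l.val < n := lt_of_lt_of_le hx hMn
    have key : ∀ ψ : Fin n × Fin n → Bool,
        sampleMeasure n (1/3) {flipC n M K r l.val ψ} ≤ (∏ c, wB (ψ c)) * W ψ := by
      intro ψ
      rw [sm_singleton]
      exact prod_flip_le hK hM hx hxn ψ
    rw [meas_sum]
    refine le_trans (le_of_eq (Finset.sum_nbij'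
      (t := Finset.univ.filter
        (fun ψ => Lh (Lmat n M K r 0 + sPrime (Lmat n M K r 0) ψ) = Lmat n M K r l.val))
      (g := fun ψ => sampleMeasure n (1/3) {flipC n M K r l.val ψ})
      (i := flipC n M K r l.val) (j := flipC n M K r l.val)
      ?_ ?_ ?_ ?_ ?_)) (Finset.sum_le_sum (fun ψ _ => key ψ))
    · intro a ha
      simp only [Finset.mem_filter, Finset.mem_univ, true_and, Set.mem_setOf_eq] at ha ⊢
      have h0 : Lmat n M K r l.val + sPrime (Lmat n M K r l.val)
          (flipC n M K r l.val (flipC n M K r l.val a))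
          = Lmat n M K r 0 + sPrime (Lmat n M K r 0) (flipC n M K r l.val a) :=
        A_flip_eq _
      rw [flipC_invol] at h0
      rw [← h0]
      exact ha
    · intro a ha
      simp only [Finset.mem_filter, Finset.mem_univ, true_and, Set.mem_setOf_eq] at ha ⊢
      rw [A_flip_eq a]
      exact ha
    · intro a _; exact flipC_invol a
    · intro a _; exact flipC_invol a
    · intro a _
      show sampleMeasure n (1/3) {a}
        = sampleMeasure n (1/3) {flipC n M K r l.val (flipC n M K r l.val a)}
      rw [flipC_invol]
  calc ∑ l : Fin M, sampleMeasure n (1/3) {ω | Lh (Lmat n M K r l.val + sPrime (Lmat n M K r l.val) ω)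
          = Lmat n M K r l.val}
      ≤ ∑ l : Fin M, ∑ ψ ∈ Finset.univ.filter
            (fun ψ => Lh (Lmat n M K r 0 + sPrime (Lmat n M K r 0) ψ) = Lmat n M K r l.val),
            (∏ c, wB (ψ c)) * W ψ := Finset.sum_le_sum (fun l _ => step1 l)
    _ = ∑ ψ ∈ Finset.univ.biUnion (fun l : Fin M => Finset.univ.filter
            (fun ψ => Lh (Lmat n M K r 0 + sPrime (Lmat n M K r 0) ψ) = Lmat n M K r l.val)),
            (∏ c, wB (ψ c)) * W ψ := by
        rw [Finset.sum_biUnion]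
        intro a _ b _ hab
        simp only [Finset.disjoint_left, Finset.mem_filter, Finset.mem_univ, true_and]
        intro ψ h1 h2
        exact Lmat_inj hK a.isLt b.isLt hMn (fun h => hab (Fin.val_injective h))
          (h1.symm.trans h2)
    _ ≤ ∑ ψ : Fin n × Fin n → Bool, (∏ c, wB (ψ c)) * W ψ :=
        Finset.sum_le_sum_of_subset (Finset.subset_univ _)
    _ = 2 ^ (G0 n M K r).card := total_weight
    _ ≤ 2 ^ (2 * K) := pow_le_pow_right₀ one_le_two (G0_card hK hM hr hn hn0)

end master

end St3

/-- Part 2 of Theorem 3: information-theoretic lower bound for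
matrix decomposition. For n ≥ 10, r ≥ 1, μ0 ≥ 2 with n/(μ0 r) and n/2 integers,
if (1/12)·μ0 r log n / n ≥ 1, there is a family of n/2 symmetric, binary, rank-r,
μ0-incoherent matrices such that every estimator of L* from A = L* + S* fails
with probability at least 1/2 for some member of the family. -/
theorem statement3 (n r : ℕ) (μ0 : ℝ) (hn : 10 ≤ n) (hr : 1 ≤ r) (hμ : 2 ≤ μ0)
    (hK : ∃ K : ℕ, (K : ℝ) = (n : ℝ) / (μ0 * r)) (h2 : 2 ∣ n)
    (hcond : 1 ≤ (1 / 12) * (μ0 * r * Real.log n / n)) :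
    ∃ L : Fin (n / 2) → Matrix (Fin n) (Fin n) ℝ,
      Function.Injective L ∧
      (∀ l, (L l)ᵀ = L l) ∧
      (∀ l i j, L l i j = 0 ∨ L l i j = 1) ∧
      (∀ l, ∃ (U : Matrix (Fin n) (Fin r) ℝ) (S : Matrix (Fin r) (Fin r) ℝ),
        Uᵀ * U = 1 ∧ (∀ i j, i ≠ j → S i j = 0) ∧ (∀ i, 0 < S i i) ∧
        L l = U * S * Uᵀ ∧ (∀ i, rowNorm U i ≤ Real.sqrt (μ0 * r / n))) ∧
      ∀ Lhat : Matrix (Fin n) (Fin n) ℝ → Matrix (Fin n) (Fin n) ℝ,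
        (1 / 2 : ENNReal) ≤
          ⨆ l, sampleMeasure n (1 / 3) {ω | Lhat (L l + sPrime (L l) ω) ≠ L l} := by
  classical
  obtain ⟨K, hKdef⟩ := hK
  set M := n / 2 with hMdef
  have hn0 : 0 < n := by omega
  have hμr : (0:ℝ) < μ0 * r := by
    have h1 : (1:ℝ) ≤ (r:ℝ) := by exact_mod_cast hr
    nlinarith
  have hKeq : (K:ℝ) * (μ0 * r) = n := by
    rw [hKdef]
    field_simp
  have hK1 : 1 ≤ K := by
    by_contra hc
    push_neg at hc
    interval_cases K
    simp only [Nat.cast_zero, zero_mul] at hKeq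
    have : (0:ℝ) < n := by exact_mod_cast hn0
    linarith
  have hKR : (0:ℝ) < K := by
    have : 0 < K := hK1
    exact_mod_cast this
  have hM2 : 2 * M = n := Nat.mul_div_cancel' h2
  have hM1 : 1 ≤ M := by omega
  have hMn : M ≤ n := by omega
  have hrK : r * K ≤ M := by
    have h1 : (2:ℝ) * (r * K) ≤ (K:ℝ) * (μ0 * r) := by nlinarith [hKR]
    rw [hKeq] at h1
    have h2' : ((2 * (r * K) : ℕ) : ℝ) ≤ ((n:ℕ) : ℝ) := by push_cast; linarith
    have h3 : 2 * (r * K) ≤ n := by exact_mod_cast h2'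
    omega
  have hnK : M + r * K - 1 ≤ n := by omega
  have hlog : 12 * (K:ℝ) ≤ Real.log n := by
    have h1 : 12 * (n:ℝ) ≤ μ0 * r * Real.log n := by
      have hnR : (0:ℝ) < n := by exact_mod_cast hn0
      have h12 : (12:ℝ) ≤ μ0 * r * Real.log n / n := by linarith
      rw [le_div_iff₀ hnR] at h12
      linarith
    have h2' : 12 * ((K:ℝ) * (μ0 * r)) ≤ (μ0 * r) * Real.log n := by rw [hKeq]; linarith
    nlinarith
  have hnum : 4 * (2:ℝ)^(2*K) < n := by
    have e1 : (2:ℝ) ≤ Real.exp 1 := by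
      have := Real.add_one_le_exp 1
      linarith
    have e2 : (2:ℝ)^(2*K) ≤ Real.exp (2*K) := by
      calc (2:ℝ)^(2*K) ≤ (Real.exp 1)^(2*K) := pow_le_pow_left₀ (by norm_num) e1 _
        _ = Real.exp (2*K) := by
            rw [← Real.exp_nat_mul]
            norm_num
    have e3 : (4:ℝ) ≤ Real.exp 2 := by
      have h4 : Real.exp 2 = Real.exp 1 * Real.exp 1 := by
        rw [← Real.exp_add]; norm_num
      nlinarith
    have e4 : 4 * (2:ℝ)^(2*K) ≤ Real.exp 2 * Real.exp (2*K) := by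
      apply mul_le_mul e3 e2 (by positivity) (Real.exp_pos 2).le
    have e5 : Real.exp 2 * Real.exp (2*K) = Real.exp (2 + 2*K) := (Real.exp_add 2 (2*K)).symm
    have e6 : Real.exp (2 + 2*(K:ℝ)) < Real.exp (12*K) := by
      apply Real.exp_lt_exp.mpr
      have : (1:ℝ) ≤ K := by exact_mod_cast hK1
      linarith
    have e7 : Real.exp (12*(K:ℝ)) ≤ n := by
      calc Real.exp (12*(K:ℝ)) ≤ Real.exp (Real.log n) := Real.exp_le_exp.mpr hlog
        _ = n := Real.exp_log (by exact_mod_cast hn0)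
    calc 4 * (2:ℝ)^(2*K) ≤ Real.exp (2 + 2*K) := by rw [← e5]; push_cast at e4 ⊢; linarith
      _ < Real.exp (12*K) := e6
      _ ≤ n := e7
  have hinv : (K:ℝ)⁻¹ = μ0 * r / n := by
    rw [show ((n:ℕ):ℝ) = (K:ℝ) * (μ0 * r) from hKeq.symm]
    field_simp
  refine ⟨fun l => St3.Lmat n M K r l.val, ?_, ?_, ?_, ?_, ?_⟩
  · -- injective
    intro a b hab
    by_contra hne
    exact St3.Lmat_inj hK1 a.isLt b.isLt hMn (fun h => hne (Fin.val_injective h)) hab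
  · intro l
    exact St3.Lmat_symm
  · intro l i j
    exact St3.Lmat_binary i j
  · intro l
    refine ⟨St3.Umat n M K r l.val, Matrix.diagonal (fun _ : Fin r => (K:ℝ)), ?_, ?_, ?_, ?_, ?_⟩
    · exact St3.UtU hK1 hM1 l.isLt hr hnK
    · intro i j hij
      exact Matrix.diagonal_apply_ne _ hij
    · intro i
      rw [Matrix.diagonal_apply_eq]
      exact hKR
    · exact St3.L_decomp hK1 hM1 l.isLt hr
    · intro i
      unfold rowNorm
      apply Real.sqrt_le_sqrt
      rw [← hinv]
      exact St3.rowNorm_sq hK1 hM1 l.isLt hr i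
  · intro Lhat
    by_contra hcon
    push_neg at hcon
    have hl : ∀ l : Fin M, sampleMeasure n (1/3)
        {ω | Lhat (St3.Lmat n M K r l.val + sPrime (St3.Lmat n M K r l.val) ω)
          ≠ St3.Lmat n M K r l.val} < 1/2 :=
      fun l => lt_of_le_of_lt (le_iSup (fun l : Fin M => sampleMeasure n (1/3)
        {ω | Lhat (St3.Lmat n M K r l.val + sPrime (St3.Lmat n M K r l.val) ω)
          ≠ St3.Lmat n M K r l.val}) l) hcon
    have hsucc : ∀ l : Fin M, (1/2 : ENNReal) ≤ sampleMeasure n (1/3)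
        {ω | Lhat (St3.Lmat n M K r l.val + sPrime (St3.Lmat n M K r l.val) ω)
          = St3.Lmat n M K r l.val} := by
      intro l
      by_contra hs
      push_neg at hs
      have hcompl : {ω | Lhat (St3.Lmat n M K r l.val + sPrime (St3.Lmat n M K r l.val) ω)
            ≠ St3.Lmat n M K r l.val}ᶜ
          = {ω | Lhat (St3.Lmat n M K r l.val + sPrime (St3.Lmat n M K r l.val) ω)
            = St3.Lmat n M K r l.val} := by
        ext ω
        simp [Set.mem_compl_iff, not_not]
      have hadd := measure_add_measure_compl (μ := sampleMeasure n (1/3))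
        (St3.meas_all {ω | Lhat (St3.Lmat n M K r l.val + sPrime (St3.Lmat n M K r l.val) ω)
          ≠ St3.Lmat n M K r l.val})
      rw [hcompl, St3.sm_univ] at hadd
      have hlt := ENNReal.add_lt_add (hl l) hs
      rw [hadd] at hlt
      rw [ENNReal.add_halves] at hlt
      exact lt_irrefl _ hlt
    have hsum : (M : ENNReal) * (1/2) ≤ 2 ^ (2*K) := by
      calc (M : ENNReal) * (1/2) = ∑ _l : Fin M, (1/2 : ENNReal) := by
            rw [Finset.sum_const, Finset.card_univ, Fintype.card_fin, nsmul_eq_mul]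
        _ ≤ ∑ l : Fin M, sampleMeasure n (1/3)
              {ω | Lhat (St3.Lmat n M K r l.val + sPrime (St3.Lmat n M K r l.val) ω)
                = St3.Lmat n M K r l.val} := Finset.sum_le_sum (fun l _ => hsucc l)
        _ ≤ 2 ^ (2*K) := St3.succ_sum hK1 hM1 hr hMn hnK hn0 Lhat
    -- convert to ℕ and contradict hnum
    have hM4 : (M : ENNReal) ≤ ((2^(2*K) * 2 : ℕ) : ENNReal) := by
      have h1 : (M : ENNReal) * (1/2) * 2 ≤ 2^(2*K) * 2 := mul_le_mul_left hsum 2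
      have h2' : (M : ENNReal) * (1/2) * 2 = M := by
        rw [mul_assoc, ENNReal.div_mul_cancel (by norm_num) (by norm_num)]
        · rw [mul_one]
      rw [h2'] at h1
      calc (M : ENNReal) ≤ 2^(2*K) * 2 := h1
        _ = ((2^(2*K) * 2 : ℕ) : ENNReal) := by push_cast; ring
    have hM5 : M ≤ 2^(2*K) * 2 := by exact_mod_cast hM4
    have hfin : (n:ℝ) ≤ 4 * (2:ℝ)^(2*K) := by
      have : n ≤ 2^(2*K) * 4 := by omega
      have h6 : ((n:ℕ):ℝ) ≤ ((2^(2*K) * 4 : ℕ) : ℝ) := by exact_mod_cast this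
      push_cast at h6
      linarith
    linarith

end
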